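/- Let q, r : ℝ → ℝ be convex functions with q(0) = 0 = r(0) and q ≥ 0, r ≥ 0 (so each attains its minimum value 0 at 0). Define f(q,r) : ℝ → ℝ by f(q,r)(x) = q(x) for x ≤ 0 and f(q,r)(x) = r(x) for x ≥ 0, and similarly f(r,q)(x) = r(x) for x ≤ 0 and f(r,q)(x) = q(x) for x ≥ 0. Then f(q,r) and f(r,q) are convex, and f(q,r) □ f(r,q) = q □ r. -/
import Mathlib


open Set

noncomputable section

/-- The infimal convolution `(u □ v)(x) = ⨅ y, u y + v (x - y)`. -/
def infConv (u v : ℝ → ℝ) (x : ℝ) : ℝ :=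
  ⨅ y : ℝ, (u y + v (x - y))

private lemma between_le_add {h : ℝ → ℝ} (hc : ConvexOn ℝ Set.univ h)
    (hnn : ∀ x, 0 ≤ h x) {a b c : ℝ} (hac : a ≤ c) (hcb : c ≤ b) :
    h c ≤ h a + h b := by
  have hmem : c ∈ segment ℝ a b := by
    rw [segment_eq_Icc (hac.trans hcb)]; exact ⟨hac, hcb⟩
  calc h c ≤ max (h a) (h b) := hc.le_on_segment (mem_univ a) (mem_univ b) hmem
    _ ≤ h a + h b := max_le (le_add_of_nonneg_right (hnn b)) (le_add_of_nonneg_left (hnn a))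

private lemma piecewise_convex {q r : ℝ → ℝ}
    (hq : ConvexOn ℝ Set.univ q) (hr : ConvexOn ℝ Set.univ r)
    (hq0 : q 0 = 0) (hr0 : r 0 = 0) (hqnn : ∀ x, 0 ≤ q x) (hrnn : ∀ x, 0 ≤ r x) :
    ConvexOn ℝ Set.univ (fun x => if x ≤ 0 then q x else r x) := by
  have heq : (fun x : ℝ => if x ≤ 0 then q x else r x)
      = (fun x : ℝ => q (min x 0)) + (fun x : ℝ => r (max x 0)) := by
    funext x
    rcases le_or_gt x 0 with h | h
    · simp [h, min_eq_left h, max_eq_right h, hr0]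
    · simp [not_le.2 h, min_eq_right h.le, max_eq_left h.le, hq0]
  rw [heq]
  have himg_min : (fun x : ℝ => min x 0) '' Set.univ = Iic (0:ℝ) := by
    ext z; constructor
    · rintro ⟨y, -, rfl⟩; exact min_le_right y 0
    · intro hz; exact ⟨z, mem_univ z, min_eq_left hz⟩
  have himg_max : (fun x : ℝ => max x 0) '' Set.univ = Ici (0:ℝ) := by
    ext z; constructor
    · rintro ⟨y, -, rfl⟩; exact le_max_right y 0
    · intro hz; exact ⟨z, mem_univ z, max_eq_left hz⟩
  have hq_anti : AntitoneOn q (Iic (0:ℝ)) := by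
    intro a ha b hb hab
    have : q b ≤ max (q a) (q 0) := by
      refine hq.le_on_segment (mem_univ a) (mem_univ 0) ?_
      rw [segment_eq_Icc (hab.trans hb)]; exact ⟨hab, hb⟩
    rwa [hq0, max_eq_left (hqnn a)] at this
  have hr_mono : MonotoneOn r (Ici (0:ℝ)) := by
    intro a ha b hb hab
    have : r a ≤ max (r 0) (r b) := by
      refine hr.le_on_segment (mem_univ 0) (mem_univ b) ?_
      rw [segment_eq_Icc (le_trans ha hab)]; exact ⟨ha, hab⟩
    rwa [hr0, max_eq_right (hrnn b)] at this
  have hmin : ConcaveOn ℝ Set.univ (fun x : ℝ => min x 0) :=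
    (concaveOn_id convex_univ).inf (concaveOn_const 0 convex_univ)
  have hmax : ConvexOn ℝ Set.univ (fun x : ℝ => max x 0) :=
    (convexOn_id convex_univ).sup (convexOn_const 0 convex_univ)
  have h1 : ConvexOn ℝ Set.univ (q ∘ fun x : ℝ => min x 0) :=
    ConvexOn.comp_concaveOn (himg_min ▸ hq.subset (subset_univ _) (convex_Iic 0))
      hmin (himg_min ▸ hq_anti)
  have h2 : ConvexOn ℝ Set.univ (r ∘ fun x : ℝ => max x 0) :=
    ConvexOn.comp (himg_max ▸ hr.subset (subset_univ _) (convex_Ici 0))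
      hmax (himg_max ▸ hr_mono)
  exact h1.add h2

/-- Example 2.5 of the paper. For nonnegative convex `q, r : ℝ → ℝ`
vanishing at `0`, the piecewise functions `f(q,r)` (equal to `q` on `(-∞,0]` and `r` on
`[0,∞)`) and `f(r,q)` are convex, and `f(q,r) □ f(r,q) = q □ r`. -/
theorem stmt19 (q r : ℝ → ℝ)
    (hq : ConvexOn ℝ Set.univ q) (hr : ConvexOn ℝ Set.univ r)
    (hq0 : q 0 = 0) (hr0 : r 0 = 0)
    (hqnn : ∀ x, 0 ≤ q x) (hrnn : ∀ x, 0 ≤ r x) :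
    ConvexOn ℝ Set.univ (fun x => if x ≤ 0 then q x else r x) ∧
    ConvexOn ℝ Set.univ (fun x => if x ≤ 0 then r x else q x) ∧
    ∀ x : ℝ,
      infConv (fun y => if y ≤ 0 then q y else r y)
        (fun y => if y ≤ 0 then r y else q y) x = infConv q r x := by
  set f : ℝ → ℝ := fun y => if y ≤ 0 then q y else r y with hf
  set g : ℝ → ℝ := fun y => if y ≤ 0 then r y else q y with hg
  have hfconv : ConvexOn ℝ Set.univ f := piecewise_convex hq hr hq0 hr0 hqnn hrnn
  have hgconv : ConvexOn ℝ Set.univ g := piecewise_convex hr hq hr0 hq0 hrnn hqnn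
  have hfnn : ∀ x, 0 ≤ f x := by intro x; simp only [hf]; split <;> [exact hqnn x; exact hrnn x]
  have hgnn : ∀ x, 0 ≤ g x := by intro x; simp only [hg]; split <;> [exact hrnn x; exact hqnn x]
  have hf0 : f 0 = 0 := by simp [hf, hq0]
  have hg0 : g 0 = 0 := by simp [hg, hr0]
  refine ⟨hfconv, hgconv, fun x => ?_⟩
  have bddF : BddBelow (Set.range fun y => f y + g (x - y)) := by
    refine ⟨0, ?_⟩; rintro _ ⟨y, rfl⟩; exact add_nonneg (hfnn y) (hgnn (x - y))
  have bddG : BddBelow (Set.range fun y => q y + r (x - y)) := by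
    refine ⟨0, ?_⟩; rintro _ ⟨y, rfl⟩; exact add_nonneg (hqnn y) (hrnn (x - y))
  unfold infConv
  apply le_antisymm
  · -- ⨅ f-side ≤ ⨅ q-side
    refine le_ciInf fun y => ?_
    rcases le_or_gt y 0 with hy | hy <;> rcases le_or_gt (x - y) 0 with hxy | hxy
    · -- y ≤ 0, x - y ≤ 0 : take y' = y
      refine ciInf_le_of_le bddF y (le_of_eq ?_)
      simp [hf, hg, hy, hxy]
    · -- y ≤ 0, x - y > 0 : take y' = 0, use g x ≤ g (x-y) + g y? No: this is for the q-side
      -- value q y + r (x - y); pick y' = x : f x + g 0 = f x ≤ f y + f (x-y) = q y + r (x-y)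
      refine ciInf_le_of_le bddF x ?_
      have hx1 : y ≤ x := by linarith
      have hx2 : x ≤ x - y := by linarith
      have := between_le_add hfconv hfnn hx1 hx2
      have e1 : f y = q y := by simp [hf, hy]
      have e2 : f (x - y) = r (x - y) := by simp [hf, not_le.2 hxy]
      calc f x + g (x - x) = f x := by simp [hg0]
        _ ≤ f y + f (x - y) := this
        _ = q y + r (x - y) := by rw [e1, e2]
    · -- y > 0, x - y ≤ 0 : take y' = 0 : f 0 + g x = g x ≤ g (x-y) + g y = r (x-y) + q y
      refine ciInf_le_of_le bddF 0 ?_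
      have hx1 : x - y ≤ x := by linarith
      have hx2 : x ≤ y := by linarith
      have := between_le_add hgconv hgnn hx1 hx2
      have e1 : g (x - y) = r (x - y) := by simp [hg, hxy]
      have e2 : g y = q y := by simp [hg, not_le.2 hy]
      calc f 0 + g (x - 0) = g x := by simp [hf0]
        _ ≤ g (x - y) + g y := this
        _ = q y + r (x - y) := by rw [e1, e2]; ring
    · -- y > 0, x - y > 0 : take y' = x - y
      refine ciInf_le_of_le bddF (x - y) (le_of_eq ?_)
      have : x - (x - y) = y := by ring
      rw [this]
      simp [hf, hg, not_le.2 hy, not_le.2 hxy, add_comm]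
  · -- ⨅ q-side ≤ ⨅ f-side
    refine le_ciInf fun y => ?_
    rcases le_or_gt y 0 with hy | hy <;> rcases le_or_gt (x - y) 0 with hxy | hxy
    · refine ciInf_le_of_le bddG y (le_of_eq ?_)
      simp [hf, hg, hy, hxy]
    · -- f y + g (x - y) = q y + q (x - y) ≥ q x = q x + r 0 : take y' = x
      refine ciInf_le_of_le bddG x ?_
      have hx1 : y ≤ x := by linarith
      have hx2 : x ≤ x - y := by linarith
      have := between_le_add hq hqnn hx1 hx2
      have e1 : f y = q y := by simp [hf, hy]
      have e2 : g (x - y) = q (x - y) := by simp [hg, not_le.2 hxy]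
      calc q x + r (x - x) = q x := by simp [hr0]
        _ ≤ q y + q (x - y) := this
        _ = f y + g (x - y) := by rw [e1, e2]
    · -- f y + g (x - y) = r y + r (x - y) ≥ r x : take y' = 0
      refine ciInf_le_of_le bddG 0 ?_
      have hx1 : x - y ≤ x := by linarith
      have hx2 : x ≤ y := by linarith
      have := between_le_add hr hrnn hx1 hx2
      have e1 : f y = r y := by simp [hf, not_le.2 hy]
      have e2 : g (x - y) = r (x - y) := by simp [hg, hxy]
      calc q 0 + r (x - 0) = r x := by simp [hq0]
        _ ≤ r (x - y) + r y := this
        _ = f y + g (x - y) := by rw [e1, e2]; ring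
    · refine ciInf_le_of_le bddG (x - y) (le_of_eq ?_)
      have hxx : x - (x - y) = y := by ring
      rw [hxx]
      simp [hf, hg, not_le.2 hy, not_le.2 hxy, add_comm]
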